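/- Let 𝔐 be a weight sequence system on ℝ^d satisfying (L) and (𝔐.2)', and let 𝒲 be a weight function system on ℝ^d satisfying (wM) and (N). Suppose (φ_n)_{n∈ℕ} is a sequence of smooth functions ℝ^d → ℂ such that for every λ > 0 there exists C > 0 such that ‖∑_{n=0}^k c_n φ_n‖_{𝒮^{M^λ}_{w^λ,∞}} ≤ C for every k ∈ ℕ and all complex numbers c_0, …, c_k with |c_n| ≤ 1. Then for every μ > 0 one has ∑_{n=0}^∞ ‖φ_n‖_{𝒮^{M^μ}_{w^μ,1}} < ∞. (Thus every weakly summable sequence in 𝒮^{(𝔐)}_{(𝒲),∞} is absolutely summable, which by Grothendieck's criterion yields the nuclearity of 𝒮^{(𝔐)}_{(𝒲)}.) -/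

import Mathlib

open MeasureTheory Filter ENNReal Asymptotics

noncomputable section

/-- Partial derivative in the `i`-th coordinate direction. -/
def pd (d : ℕ) (i : Fin d) (f : EuclideanSpace ℝ (Fin d) → ℂ) :
    EuclideanSpace ℝ (Fin d) → ℂ :=
  fun x => fderiv ℝ f x (EuclideanSpace.single i 1)

/-- Iterated partial derivative in the `i`-th coordinate direction. -/
def pdPow (d : ℕ) (i : Fin d) :
    ℕ → (EuclideanSpace ℝ (Fin d) → ℂ) → EuclideanSpace ℝ (Fin d) → ℂ
  | 0, f => f
  | n + 1, f => pd d i (pdPow d i n f)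

/-- Mixed partial derivative `∂^α` for a multi-index `α : Fin d → ℕ`. -/
def pdMulti (d : ℕ) (α : Fin d → ℕ) (f : EuclideanSpace ℝ (Fin d) → ℂ) :
    EuclideanSpace ℝ (Fin d) → ℂ :=
  (List.finRange d).foldr (fun i g => pdPow d i (α i) g) f

/-- The Gelfand–Shilov seminorm `‖φ‖_{𝒮^M_{w,q}}`, as an `ℝ≥0∞`-valued quantity:
`sup_α ‖(∂^α φ)·w‖_{L^q} / M_α`. -/
def gsNorm (d : ℕ) (M : (Fin d → ℕ) → ℝ) (w : EuclideanSpace ℝ (Fin d) → ℝ)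
    (q : ℝ≥0∞) (φ : EuclideanSpace ℝ (Fin d) → ℂ) : ℝ≥0∞ :=
  ⨆ α : Fin d → ℕ,
    eLpNorm (fun x => ‖pdMulti d α φ x‖ * w x) q volume / ENNReal.ofReal (M α)

/-- The lattice point of `ℤ^d` inside `ℝ^d`. -/
def intPt (d : ℕ) (j : Fin d → ℤ) : EuclideanSpace ℝ (Fin d) :=
  (WithLp.equiv 2 (Fin d → ℝ)).symm fun i => (j i : ℝ)

/-- The associated function `ω_M(x) = sup_α log (|x^α| M_0 / M_α)` of a (multi-indexed)
sequence `M`. -/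
def assocFun (d : ℕ) (M : (Fin d → ℕ) → ℝ) (x : EuclideanSpace ℝ (Fin d)) : ℝ :=
  ⨆ α : Fin d → ℕ, Real.log ((∏ i, |x i| ^ α i) * M 0 / M α)

/-- `w` is a weight function system on `ℝ^d`: each `w λ` (for `λ > 0`) is continuous, `≥ 1`,
and `w λ ≤ w μ` pointwise whenever `μ ≤ λ`. -/
structure IsWFS (d : ℕ) (w : ℝ → EuclideanSpace ℝ (Fin d) → ℝ) : Prop where
  cont : ∀ l, 0 < l → Continuous (w l)
  one_le : ∀ l, 0 < l → ∀ x, 1 ≤ w l x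
  mono : ∀ m l, 0 < m → m ≤ l → ∀ x, w l x ≤ w m x

/-- Condition (wM) (Beurling) for a weight function system. -/
def WFS_wM_B (d : ℕ) (w : ℝ → EuclideanSpace ℝ (Fin d) → ℝ) : Prop :=
  ∀ l, 0 < l → ∃ m, 0 < m ∧ ∃ C, 0 < C ∧
    ∀ x y : EuclideanSpace ℝ (Fin d), ‖y‖ ≤ 1 → w l (x + y) ≤ C * w m x

/-- Condition {wM} (Roumieu) for a weight function system. -/
def WFS_wM_R (d : ℕ) (w : ℝ → EuclideanSpace ℝ (Fin d) → ℝ) : Prop :=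
  ∀ m, 0 < m → ∃ l, 0 < l ∧ ∃ C, 0 < C ∧
    ∀ x y : EuclideanSpace ℝ (Fin d), ‖y‖ ≤ 1 → w l (x + y) ≤ C * w m x

/-- Condition (M) (Beurling) for a weight function system. -/
def WFS_M_B (d : ℕ) (w : ℝ → EuclideanSpace ℝ (Fin d) → ℝ) : Prop :=
  ∀ l, 0 < l → ∃ m, 0 < m ∧ ∃ n, 0 < n ∧ ∃ C, 0 < C ∧
    ∀ x y : EuclideanSpace ℝ (Fin d), w l (x + y) ≤ C * w m x * w n y

/-- Condition (N) (Beurling) for a weight function system. -/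
def WFS_N_B (d : ℕ) (w : ℝ → EuclideanSpace ℝ (Fin d) → ℝ) : Prop :=
  ∀ l, 0 < l → ∃ m, 0 < m ∧ Integrable (fun x => w l x / w m x) volume

/-- Condition {N} (Roumieu) for a weight function system. -/
def WFS_N_R (d : ℕ) (w : ℝ → EuclideanSpace ℝ (Fin d) → ℝ) : Prop :=
  ∀ m, 0 < m → ∃ l, 0 < l ∧ Integrable (fun x => w l x / w m x) volume

/-- `M` is a weight sequence system on `ℝ^d`: each `M λ` (for `λ > 0`) is a positive
sequence with `(M^λ_α)^{1/|α|} → ∞` satisfying the log-convexity condition (M.1), and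
`M^λ_α ≤ M^μ_α` whenever `λ ≤ μ`. -/
structure IsWSS (d : ℕ) (M : ℝ → (Fin d → ℕ) → ℝ) : Prop where
  pos : ∀ l, 0 < l → ∀ α, 0 < M l α
  growth : ∀ l, 0 < l → ∀ R : ℝ, 0 < R → ∃ N : ℕ, ∀ α : Fin d → ℕ,
    N ≤ ∑ i, α i → R ^ (∑ i, α i) ≤ M l α
  logconvex : ∀ l, 0 < l → ∀ (α : Fin d → ℕ) (j : Fin d),
    M l (α + Pi.single j 1) ^ 2 ≤ M l α * M l (α + Pi.single j 2)
  mono : ∀ l m, 0 < l → l ≤ m → ∀ α, M l α ≤ M m α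

/-- Condition (L) (Beurling) for a weight sequence system. -/
def WSS_L_B (d : ℕ) (M : ℝ → (Fin d → ℕ) → ℝ) : Prop :=
  ∀ R : ℝ, 0 < R → ∀ l, 0 < l → ∃ m, 0 < m ∧ ∃ C, 0 < C ∧
    ∀ α : Fin d → ℕ, R ^ (∑ i, α i) * M m α ≤ C * M l α

/-- Condition {L} (Roumieu) for a weight sequence system. -/
def WSS_L_R (d : ℕ) (M : ℝ → (Fin d → ℕ) → ℝ) : Prop :=
  ∀ R : ℝ, 0 < R → ∀ m, 0 < m → ∃ l, 0 < l ∧ ∃ C, 0 < C ∧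
    ∀ α : Fin d → ℕ, R ^ (∑ i, α i) * M m α ≤ C * M l α

/-- Condition (𝔐.2)' (Beurling) for a weight sequence system. -/
def WSS_M2_B (d : ℕ) (M : ℝ → (Fin d → ℕ) → ℝ) : Prop :=
  ∀ l, 0 < l → ∃ m, 0 < m ∧ ∃ C, 0 < C ∧ ∃ H, 0 < H ∧
    ∀ (α : Fin d → ℕ) (j : Fin d),
      M m (α + Pi.single j 1) ≤ C * H ^ (∑ i, α i) * M l α

/-- Condition {𝔐.2}' (Roumieu) for a weight sequence system. -/
def WSS_M2_R (d : ℕ) (M : ℝ → (Fin d → ℕ) → ℝ) : Prop :=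
  ∀ m, 0 < m → ∃ l, 0 < l ∧ ∃ C, 0 < C ∧ ∃ H, 0 < H ∧
    ∀ (α : Fin d → ℕ) (j : Fin d),
      M l (α + Pi.single j 1) ≤ C * H ^ (∑ i, α i) * M m α

/-- A weight sequence system is accelerating if `M^λ_{α+e_j}/M^λ_α ≤ M^μ_{α+e_j}/M^μ_α`
for `λ ≤ μ`. -/
def WSSAccel (d : ℕ) (M : ℝ → (Fin d → ℕ) → ℝ) : Prop :=
  ∀ l m, 0 < l → l ≤ m → ∀ (α : Fin d → ℕ) (j : Fin d),
    M l (α + Pi.single j 1) / M l α ≤ M m (α + Pi.single j 1) / M m α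

/-- A weight sequence system is isotropically decomposable: there is a partition of the `d`
coordinates into `k` blocks (equivalently, after a permutation of the coordinates, a
decomposition `ℕ^d = ℕ^{d_1} × ⋯ × ℕ^{d_k}`) and positive functions `m^λ_j : ℕ → (0,∞)` with
`M^λ_α = ∏_j m^λ_j (|α^{(j)}|)`. -/
def IsoDecomposable (d : ℕ) (M : ℝ → (Fin d → ℕ) → ℝ) : Prop :=
  ∃ (k : ℕ) (b : Fin d → Fin k) (m : ℝ → Fin k → ℕ → ℝ),
    (∀ l, 0 < l → ∀ j n, 0 < m l j n) ∧
    ∀ l, 0 < l → ∀ α : Fin d → ℕ,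
      M l α = ∏ j, m l j (∑ i ∈ Finset.univ.filter fun i => b i = j, α i)

/-- Membership in the Beurling Gelfand–Shilov class `𝒮^{(𝔐)}_{(𝒲),q}`. -/
def gsBeurling (d : ℕ) (M : ℝ → (Fin d → ℕ) → ℝ) (w : ℝ → EuclideanSpace ℝ (Fin d) → ℝ)
    (q : ℝ≥0∞) (φ : EuclideanSpace ℝ (Fin d) → ℂ) : Prop :=
  ContDiff ℝ (⊤ : ℕ∞) φ ∧ ∀ l, 0 < l → gsNorm d (M l) (w l) q φ < ⊤

/-- Membership in the Roumieu Gelfand–Shilov class `𝒮^{{𝔐}}_{{𝒲},q}`. -/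
def gsRoumieu (d : ℕ) (M : ℝ → (Fin d → ℕ) → ℝ) (w : ℝ → EuclideanSpace ℝ (Fin d) → ℝ)
    (q : ℝ≥0∞) (φ : EuclideanSpace ℝ (Fin d) → ℂ) : Prop :=
  ContDiff ℝ (⊤ : ℕ∞) φ ∧ ∃ l, 0 < l ∧ gsNorm d (M l) (w l) q φ < ⊤

/-- Membership in the auxiliary space `𝒮̃^{(𝔐)}_{(𝒲)}`. -/
def gsTilde (d : ℕ) (M : ℝ → (Fin d → ℕ) → ℝ) (w : ℝ → EuclideanSpace ℝ (Fin d) → ℝ)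
    (ψ : EuclideanSpace ℝ (Fin d) → ℂ) : Prop :=
  ContDiff ℝ (⊤ : ℕ∞) ψ ∧ ∀ l, 0 < l → ∀ k : ℕ, ∃ C : ℝ,
    ∀ (α : Fin d → ℕ) (x : EuclideanSpace ℝ (Fin d)),
      ‖pdMulti d α ψ x‖ * (1 + ‖x‖) ^ k * w l x / M l α ≤ C

end

noncomputable section AuxLemmas

variable {d : ℕ}

lemma smooth_diff {f : EuclideanSpace ℝ (Fin d) → ℂ} (hf : ContDiff ℝ (⊤ : ℕ∞) f) :
    Differentiable ℝ f := hf.differentiable (by simp)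

lemma contDiff_pd {i : Fin d} {f : EuclideanSpace ℝ (Fin d) → ℂ}
    (hf : ContDiff ℝ (⊤ : ℕ∞) f) : ContDiff ℝ (⊤ : ℕ∞) (pd d i f) := by
  have h1 : ContDiff ℝ (⊤ : ℕ∞) (fderiv ℝ f) := hf.fderiv_right (by exact_mod_cast le_top)
  exact h1.clm_apply contDiff_const

lemma pd_sum {i : Fin d} (s : Finset ℕ) (c : ℕ → ℂ) (f : ℕ → EuclideanSpace ℝ (Fin d) → ℂ)
    (hf : ∀ n ∈ s, Differentiable ℝ (f n)) :
    pd d i (fun x => ∑ n ∈ s, c n * f n x) = fun x => ∑ n ∈ s, c n * pd d i (f n) x := by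
  funext x
  have h1 : ∀ n ∈ s, DifferentiableAt ℝ (fun y => c n * f n y) x :=
    fun n hn => ((hf n hn) x).const_mul _
  simp only [pd, fderiv_fun_sum h1, ContinuousLinearMap.sum_apply]
  refine Finset.sum_congr rfl fun n hn => ?_
  rw [fderiv_const_mul ((hf n hn) x) (c n)]
  simp

lemma contDiff_pdPow {i : Fin d} (n : ℕ) {f : EuclideanSpace ℝ (Fin d) → ℂ}
    (hf : ContDiff ℝ (⊤ : ℕ∞) f) : ContDiff ℝ (⊤ : ℕ∞) (pdPow d i n f) := by
  induction n with
  | zero => exact hf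
  | succ n ih => exact contDiff_pd ih

lemma pdPow_sum {i : Fin d} (m : ℕ) (s : Finset ℕ) (c : ℕ → ℂ)
    (f : ℕ → EuclideanSpace ℝ (Fin d) → ℂ) (hf : ∀ n, ContDiff ℝ (⊤ : ℕ∞) (f n)) :
    pdPow d i m (fun x => ∑ n ∈ s, c n * f n x)
      = fun x => ∑ n ∈ s, c n * pdPow d i m (f n) x := by
  induction m with
  | zero => rfl
  | succ m ih =>
    show pd d i (pdPow d i m fun x => ∑ n ∈ s, c n * f n x) = _
    rw [ih]
    exact pd_sum s c (fun n => pdPow d i m (f n))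
      (fun n _ => smooth_diff (contDiff_pdPow m (hf n)))

lemma contDiff_foldr (L : List (Fin d)) (α : Fin d → ℕ) {f : EuclideanSpace ℝ (Fin d) → ℂ}
    (hf : ContDiff ℝ (⊤ : ℕ∞) f) :
    ContDiff ℝ (⊤ : ℕ∞) (L.foldr (fun i g => pdPow d i (α i) g) f) := by
  induction L with
  | nil => exact hf
  | cons i L ih => exact contDiff_pdPow _ ih

lemma contDiff_pdMulti (α : Fin d → ℕ) {f : EuclideanSpace ℝ (Fin d) → ℂ}
    (hf : ContDiff ℝ (⊤ : ℕ∞) f) : ContDiff ℝ (⊤ : ℕ∞) (pdMulti d α f) :=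
  contDiff_foldr _ α hf

lemma foldr_sum (L : List (Fin d)) (α : Fin d → ℕ) (s : Finset ℕ) (c : ℕ → ℂ)
    (f : ℕ → EuclideanSpace ℝ (Fin d) → ℂ) (hf : ∀ n, ContDiff ℝ (⊤ : ℕ∞) (f n)) :
    L.foldr (fun i g => pdPow d i (α i) g) (fun x => ∑ n ∈ s, c n * f n x)
      = fun x => ∑ n ∈ s, c n * L.foldr (fun i g => pdPow d i (α i) g) (f n) x := by
  induction L with
  | nil => rfl
  | cons i L ih =>
    simp only [List.foldr_cons]
    rw [ih]
    exact pdPow_sum (α i) s c _ (fun n => contDiff_foldr L α (hf n))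

lemma pdMulti_sum (α : Fin d → ℕ) (s : Finset ℕ) (c : ℕ → ℂ)
    (f : ℕ → EuclideanSpace ℝ (Fin d) → ℂ) (hf : ∀ n, ContDiff ℝ (⊤ : ℕ∞) (f n)) :
    pdMulti d α (fun x => ∑ n ∈ s, c n * f n x)
      = fun x => ∑ n ∈ s, c n * pdMulti d α (f n) x :=
  foldr_sum _ α s c f hf

def cF (k : ℕ) (s : Fin (k + 1) → Bool) : ℕ → ℂ :=
  fun n => if h : n < k + 1 then (if s ⟨n, h⟩ then 1 else -1) else 0

lemma cF_norm_le (k : ℕ) (s : Fin (k + 1) → Bool) : ∀ n, n ≤ k → ‖cF k s n‖ ≤ 1 := by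
  intro n hn
  simp only [cF, dif_pos (Nat.lt_succ_of_le hn)]
  rcases (s ⟨n, Nat.lt_succ_of_le hn⟩) <;> simp

lemma sum_norm_le (k : ℕ) (a : ℕ → ℂ) (B : ℝ)
    (h : ∀ s : Fin (k + 1) → Bool, ‖∑ n ∈ Finset.range (k + 1), cF k s n * a n‖ ≤ B) :
    ∑ n ∈ Finset.range (k + 1), ‖a n‖ ≤ 2 * B := by
  have hre : ∑ n ∈ Finset.range (k + 1), |(a n).re| ≤ B := by
    set s : Fin (k + 1) → Bool := fun i => decide (0 ≤ (a i).re) with hs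
    have : ∑ n ∈ Finset.range (k + 1), |(a n).re|
        = (∑ n ∈ Finset.range (k + 1), cF k s n * a n).re := by
      rw [Complex.re_sum]
      refine Finset.sum_congr rfl fun n hn => ?_
      have hn' : n < k + 1 := Finset.mem_range.1 hn
      simp only [cF, dif_pos hn', hs]
      rcases le_or_gt 0 (a n).re with h0 | h0
      · simp [h0, abs_of_nonneg h0]
      · simp [not_le.2 h0, abs_of_neg h0]
    rw [this]
    exact le_trans (Complex.re_le_norm _) (by exact h s)
  have him : ∑ n ∈ Finset.range (k + 1), |(a n).im| ≤ B := by
    set s : Fin (k + 1) → Bool := fun i => decide (0 ≤ (a i).im) with hs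
    have : ∑ n ∈ Finset.range (k + 1), |(a n).im|
        = (∑ n ∈ Finset.range (k + 1), cF k s n * a n).im := by
      rw [Complex.im_sum]
      refine Finset.sum_congr rfl fun n hn => ?_
      have hn' : n < k + 1 := Finset.mem_range.1 hn
      simp only [cF, dif_pos hn', hs]
      rcases le_or_gt 0 (a n).im with h0 | h0
      · simp [h0, abs_of_nonneg h0]
      · simp [not_le.2 h0, abs_of_neg h0]
    rw [this]
    refine le_trans (le_trans (le_abs_self _) (Complex.abs_im_le_norm _)) ?_
    exact h s
  calc ∑ n ∈ Finset.range (k + 1), ‖a n‖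
      ≤ ∑ n ∈ Finset.range (k + 1), (|(a n).re| + |(a n).im|) := by
        refine Finset.sum_le_sum fun n _ => ?_
        exact Complex.norm_le_abs_re_add_abs_im _
    _ = ∑ n ∈ Finset.range (k + 1), |(a n).re| + ∑ n ∈ Finset.range (k + 1), |(a n).im| :=
        Finset.sum_add_distrib
    _ ≤ B + B := add_le_add hre him
    _ = 2 * B := by ring

lemma tsum_pow_sum (d : ℕ) (r : ℝ≥0∞) :
    ∑' α : Fin d → ℕ, r ^ (∑ i, α i) = (∑' n : ℕ, r ^ n) ^ d := by
  induction d with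
  | zero =>
    rw [pow_zero, tsum_eq_single (fun _ : Fin 0 => 0)
      (fun b hb => absurd (Subsingleton.elim b _) hb)]
    simp
  | succ d ih =>
    have he := ((Fin.consEquiv (fun _ : Fin (d + 1) => ℕ)).tsum_eq (fun α : Fin (d + 1) → ℕ => r ^ (∑ i, α i)))
    have hc : ∀ c : ℕ × (Fin d → ℕ),
        r ^ (∑ i, ((Fin.consEquiv (fun _ : Fin (d + 1) => ℕ)) c) i) = r ^ c.1 * r ^ (∑ i, c.2 i) := by
      rintro ⟨n, β⟩
      rw [← pow_add]
      congr 1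
      rw [Fin.sum_univ_succ]
      simp [Fin.consEquiv]
    rw [← he, tsum_congr hc, ENNReal.tsum_prod (f := fun (a : ℕ) (b : Fin d → ℕ) => r ^ a * r ^ (∑ i, b i))]
    simp_rw [ENNReal.tsum_mul_left, ih, ENNReal.tsum_mul_right, pow_succ]
    ring

end AuxLemmas

/-- Every weakly summable sequence in `𝒮^{(𝔐)}_{(𝒲),∞}` is absolutely summable (the key step
in the proof of nuclearity of `𝒮^{(𝔐)}_{(𝒲)}` via Grothendieck's criterion). -/
theorem stmt14 (d : ℕ) (M : ℝ → (Fin d → ℕ) → ℝ) (w : ℝ → EuclideanSpace ℝ (Fin d) → ℝ)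
    (hM : IsWSS d M) (hL : WSS_L_B d M) (hM2 : WSS_M2_B d M)
    (hW : IsWFS d w) (hwM : WFS_wM_B d w) (hN : WFS_N_B d w)
    (φn : ℕ → EuclideanSpace ℝ (Fin d) → ℂ) (hsm : ∀ n, ContDiff ℝ (⊤ : ℕ∞) (φn n))
    (hweak : ∀ l, 0 < l → ∃ C, 0 < C ∧ ∀ (k : ℕ) (c : ℕ → ℂ), (∀ n, n ≤ k → ‖c n‖ ≤ 1) →
      gsNorm d (M l) (w l) ⊤ (fun x => ∑ n ∈ Finset.range (k + 1), c n * φn n x) ≤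
        ENNReal.ofReal C) :
    ∀ m, 0 < m → ∑' n : ℕ, gsNorm d (M m) (w m) 1 (φn n) < ⊤ := by
  intro μ hμ
  obtain ⟨m', hm', C', hC', hL'⟩ := hL 2 two_pos μ hμ
  obtain ⟨ν, hν, hint⟩ := hN μ hμ
  set l := min ν m' with hldef
  have hlpos : 0 < l := lt_min hν hm'
  obtain ⟨Cl, hCl, hweakl⟩ := hweak l hlpos
  set g : ℕ → (Fin d → ℕ) → EuclideanSpace ℝ (Fin d) → ℂ :=
    fun n α => pdMulti d α (φn n) with hgdef
  have hgsm : ∀ n α, ContDiff ℝ (⊤ : ℕ∞) (g n α) := fun n α => contDiff_pdMulti α (hsm n)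
  set I : ℝ≥0∞ := ∫⁻ x, ENNReal.ofReal (w μ x / w ν x) with hIdef
  have hIlt : I < ⊤ := by
    refine lt_of_le_of_lt (lintegral_mono fun x => Real.ofReal_le_enorm _) hint.2
  -- key estimate per α, k
  have key : ∀ (α : Fin d → ℕ) (k : ℕ),
      ∑ n ∈ Finset.range (k + 1), ∫⁻ x, ENNReal.ofReal (‖g n α x‖ * w μ x)
        ≤ ENNReal.ofReal (2 * Cl * M l α) * I := by
    intro α k
    have hMpos : 0 < M l α := hM.pos l hlpos α
    have hmeas : ∀ n, Measurable fun x => ENNReal.ofReal (‖g n α x‖ * w μ x) := fun n =>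
      (((hgsm n α).continuous.norm.mul (hW.cont μ hμ)).measurable).ennreal_ofReal
    rw [← lintegral_finset_sum _ fun n _ => hmeas n]
    have hae : ∀ᵐ x, ∀ s : Fin (k + 1) → Bool,
        ‖∑ n ∈ Finset.range (k + 1), cF k s n * g n α x‖ * w l x ≤ Cl * M l α := by
      rw [ae_all_iff]
      intro s
      have hb := hweakl k (cF k s) (cF_norm_le k s)
      simp only [gsNorm] at hb
      have h2 := le_trans (le_iSup _ α) hb
      have h3 := (ENNReal.div_le_iff (ENNReal.ofReal_pos.2 hMpos).ne' ENNReal.ofReal_ne_top).1 h2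
      rw [pdMulti_sum α (Finset.range (k + 1)) (cF k s) φn hsm] at h3
      rw [eLpNorm_exponent_top, eLpNormEssSup] at h3
      filter_upwards [ae_le_essSup
        (fun x => ‖(‖∑ n ∈ Finset.range (k + 1), cF k s n * g n α x‖ * w l x)‖ₑ)]
        with x hx
      have h4 := le_trans hx h3
      rw [Real.enorm_eq_ofReal
        (mul_nonneg (norm_nonneg _) (le_trans zero_le_one (hW.one_le l hlpos x))),
        ← ENNReal.ofReal_mul hCl.le] at h4
      exact (ENNReal.ofReal_le_ofReal_iff (by positivity)).1 h4
    refine le_trans (lintegral_mono_ae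
      (g := fun x => ENNReal.ofReal (2 * Cl * M l α) * ENNReal.ofReal (w μ x / w ν x))
      (hae.mono fun x hx => ?_)) ?_
    · -- pointwise bound
      have hwl : 0 < w l x := lt_of_lt_of_le one_pos (hW.one_le l hlpos x)
      have hwμ : (0:ℝ) ≤ w μ x := le_trans zero_le_one (hW.one_le μ hμ x)
      have hwn : 0 < w ν x := lt_of_lt_of_le one_pos (hW.one_le ν hν x)
      have hsum : ∑ n ∈ Finset.range (k + 1), ‖g n α x‖ ≤ 2 * (Cl * M l α / w l x) :=
        sum_norm_le k (fun n => g n α x) _ (fun s => (le_div_iff₀ hwl).2 (hx s))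
      have hdiv : w μ x / w l x ≤ w μ x / w ν x :=
        div_le_div_of_nonneg_left (le_trans zero_le_one (hW.one_le μ hμ x)) hwn
          (hW.mono l ν hlpos (min_le_left _ _) x)
      have hptr : ∑ n ∈ Finset.range (k + 1), ‖g n α x‖ * w μ x
          ≤ 2 * Cl * M l α * (w μ x / w ν x) := by
        rw [← Finset.sum_mul]
        calc (∑ n ∈ Finset.range (k + 1), ‖g n α x‖) * w μ x
            ≤ 2 * (Cl * M l α / w l x) * w μ x :=
              mul_le_mul_of_nonneg_right hsum hwμ
          _ = 2 * Cl * M l α * (w μ x / w l x) := by ring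
          _ ≤ 2 * Cl * M l α * (w μ x / w ν x) :=
              mul_le_mul_of_nonneg_left hdiv (by positivity)
      calc ∑ n ∈ Finset.range (k + 1), ENNReal.ofReal (‖g n α x‖ * w μ x)
          = ENNReal.ofReal (∑ n ∈ Finset.range (k + 1), ‖g n α x‖ * w μ x) :=
            (ENNReal.ofReal_sum_of_nonneg fun n _ => mul_nonneg (norm_nonneg _) hwμ).symm
        _ ≤ ENNReal.ofReal (2 * Cl * M l α * (w μ x / w ν x)) := ENNReal.ofReal_le_ofReal hptr
        _ = ENNReal.ofReal (2 * Cl * M l α) * ENNReal.ofReal (w μ x / w ν x) :=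
            ENNReal.ofReal_mul (by positivity)
    · rw [lintegral_const_mul _
        (Measurable.ennreal_ofReal (by exact (hW.cont μ hμ).measurable.div (hW.cont ν hν).measurable : Measurable fun x => w μ x / w ν x))]
  -- tsum over n version
  have keyT : ∀ α : Fin d → ℕ,
      ∑' n : ℕ, ∫⁻ x, ENNReal.ofReal (‖g n α x‖ * w μ x)
        ≤ ENNReal.ofReal (2 * Cl * M l α) * I := by
    intro α
    rw [ENNReal.tsum_eq_iSup_nat]
    refine iSup_le fun k => le_trans ?_ (key α k)
    exact Finset.sum_le_sum_of_subset (Finset.range_subset_range.2 (Nat.le_succ k))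
  have hA : ∀ (n : ℕ) (α : Fin d → ℕ),
      eLpNorm (fun x => ‖pdMulti d α (φn n) x‖ * w μ x) 1 volume
        = ∫⁻ x, ENNReal.ofReal (‖g n α x‖ * w μ x) := by
    intro n α
    rw [eLpNorm_one_eq_lintegral_enorm]
    exact lintegral_congr fun x => Real.enorm_eq_ofReal
      (mul_nonneg (norm_nonneg _) (le_trans zero_le_one (hW.one_le μ hμ x)))
  set r : ℝ≥0∞ := ENNReal.ofReal (1 / 2) with hrdef
  have hr1 : r < 1 := ENNReal.ofReal_lt_one.2 (by norm_num)
  set D : ℝ≥0∞ := ENNReal.ofReal (2 * Cl) * I * ENNReal.ofReal C' with hDdef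
  have hDlt : D < ⊤ :=
    ENNReal.mul_lt_top (ENNReal.mul_lt_top ENNReal.ofReal_lt_top hIlt) ENNReal.ofReal_lt_top
  have hterm : ∀ α : Fin d → ℕ,
      ENNReal.ofReal (2 * Cl * M l α) * I / ENNReal.ofReal (M μ α)
        ≤ D * r ^ (∑ i, α i) := by
    intro α
    have hMμ : 0 < M μ α := hM.pos μ hμ α
    rw [ENNReal.div_le_iff (ENNReal.ofReal_pos.2 hMμ).ne' ENNReal.ofReal_ne_top]
    have h2s : (0 : ℝ) < 2 ^ (∑ i, α i) := by positivity
    have hreal : 2 * Cl * M l α ≤ 2 * Cl * (C' * (1 / 2) ^ (∑ i, α i) * M μ α) := by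
      refine mul_le_mul_of_nonneg_left ?_ (by positivity)
      have h1 : M l α ≤ M m' α := hM.mono l m' hlpos (min_le_right _ _) α
      have h2 : M m' α ≤ C' * M μ α / 2 ^ (∑ i, α i) := by
        rw [le_div_iff₀ h2s]
        calc M m' α * 2 ^ (∑ i, α i) = 2 ^ (∑ i, α i) * M m' α := by ring
          _ ≤ C' * M μ α := hL' α
      calc M l α ≤ C' * M μ α / 2 ^ (∑ i, α i) := le_trans h1 h2
        _ = C' * (1 / 2) ^ (∑ i, α i) * M μ α := by
            rw [one_div, inv_pow]; ring
    calc ENNReal.ofReal (2 * Cl * M l α) * I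
        ≤ ENNReal.ofReal (2 * Cl * (C' * (1 / 2) ^ (∑ i, α i) * M μ α)) * I :=
          mul_le_mul_left (ENNReal.ofReal_le_ofReal hreal) I
      _ = D * r ^ (∑ i, α i) * ENNReal.ofReal (M μ α) := by
          rw [ENNReal.ofReal_mul (by positivity : (0:ℝ) ≤ 2 * Cl),
            ENNReal.ofReal_mul (by positivity : (0:ℝ) ≤ C' * (1 / 2) ^ (∑ i, α i)),
            ENNReal.ofReal_mul hC'.le,
            ENNReal.ofReal_pow (by norm_num : (0:ℝ) ≤ 1 / 2), hDdef, hrdef]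
          ring
  calc ∑' n : ℕ, gsNorm d (M μ) (w μ) 1 (φn n)
      ≤ ∑' (n : ℕ) (α : Fin d → ℕ),
          (∫⁻ x, ENNReal.ofReal (‖g n α x‖ * w μ x)) / ENNReal.ofReal (M μ α) := by
        refine ENNReal.tsum_le_tsum fun n => ?_
        simp only [gsNorm]
        refine iSup_le fun α => ?_
        rw [hA n α]
        exact ENNReal.le_tsum α
    _ = ∑' (α : Fin d → ℕ),
          (∑' n : ℕ, ∫⁻ x, ENNReal.ofReal (‖g n α x‖ * w μ x)) / ENNReal.ofReal (M μ α) := by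
        rw [ENNReal.tsum_comm]
        congr 1
        funext α
        simp only [div_eq_mul_inv, ENNReal.tsum_mul_right]
    _ ≤ ∑' α : Fin d → ℕ, D * r ^ (∑ i, α i) := by
        refine ENNReal.tsum_le_tsum fun α => ?_
        exact le_trans (ENNReal.div_le_div_right (keyT α) _) (hterm α)
    _ = D * ∑' α : Fin d → ℕ, r ^ (∑ i, α i) := ENNReal.tsum_mul_left
    _ < ⊤ := by
        refine ENNReal.mul_lt_top hDlt ?_
        rw [tsum_pow_sum, ENNReal.tsum_geometric]
        exact ENNReal.pow_lt_top (ENNReal.inv_lt_top.2 (tsub_pos_of_lt hr1))
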